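/- Fix ε > 0 and δ ∈ (0,1), assume N is nonempty, and let m = ⌈(|N|² / (2ε²)) · ln(2^{|P|+1} / δ)⌉. Then for any fixed S ⊆ P, under m independent draws of realizations (i.e., the product distribution on m-tuples (H_1, …, H_m) of subsets of E, where each H_i has probability Pr(H_i)), the probability that |F(S) − F̂_m(S)| > ε is at most δ, where F̂_m(S) = (1/m) Σ_{i=1}^m f_{H_i}(S). Formally: Σ over all m-tuples (H_1, …, H_m) with |F(S) − (1/m) Σ_i f_{H_i}(S)| > ε of ∏_{i=1}^m Pr(H_i) is at most δ. -/

import Mathlib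

open Finset

/-- A single transmission step along a live edge of `H`, avoiding the removed vertex set `S`. -/
def MintStep {α : Type*} (H : Finset (α × α)) (S : Finset α) (x y : α) : Prop :=
  (x, y) ∈ H ∧ x ∉ S ∧ y ∉ S

/-- `u` is reachable from `v` in `H[V \ S]`: there is a directed path (possibly of length 0)
from `v` to `u` using only edges of `H`, all of whose vertices avoid `S`. -/
def MintReach {α : Type*} (H : Finset (α × α)) (S : Finset α) (v u : α) : Prop :=
  v ∉ S ∧ Relation.ReflTransGen (MintStep H S) v u

/-- The realized MINT objective `f_H(S)`: the number of negative nodes (nodes outside `P`)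
reachable from some untreated positive node (a node of `P \ S`) in `H[V \ S]`. -/
noncomputable def mintf {α : Type*} [DecidableEq α] (P : Finset α) (H : Finset (α × α))
    (S : Finset α) : ℕ :=
  Set.ncard {u : α | u ∉ P ∧ ∃ v ∈ P \ S, MintReach H S v u}

/-- The probability of the live-edge realization `H ⊆ E`. -/
def mintPr {α : Type*} [DecidableEq α] (E : Finset (α × α)) (w : α × α → ℝ)
    (H : Finset (α × α)) : ℝ :=
  (∏ e ∈ H, w e) * ∏ e ∈ E \ H, (1 - w e)

/-- The expected MINT objective `F(S) = Σ_{H ⊆ E} Pr(H) · f_H(S)`. -/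
noncomputable def mintF {α : Type*} [DecidableEq α] (E : Finset (α × α)) (w : α × α → ℝ)
    (P : Finset α) (S : Finset α) : ℝ :=
  ∑ H ∈ E.powerset, mintPr E w H * (mintf P H S : ℝ)


private lemma mintD_pos (p : ℝ) (hp0 : 0 ≤ p) (hp1 : p ≤ 1) (x : ℝ) :
    0 < 1 - p + p * Real.exp x := by
  rcases eq_or_lt_of_le hp1 with h | h
  · simp [← h]; positivity
  · have : 0 ≤ p * Real.exp x := by positivity
    linarith

/-- Core Hoeffding kernel inequality. -/
private lemma mint_key (p : ℝ) (hp0 : 0 ≤ p) (hp1 : p ≤ 1) (h : ℝ) :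
    1 - p + p * Real.exp h ≤ Real.exp (p * h + h ^ 2 / 8) := by
  set D : ℝ → ℝ := fun x => 1 - p + p * Real.exp x with hD
  have hDpos : ∀ x, 0 < D x := mintD_pos p hp0 hp1
  set g : ℝ → ℝ := fun x => p * x + x ^ 2 / 8 - Real.log (D x) with hg
  set g' : ℝ → ℝ := fun x => p + x / 4 - p * Real.exp x / D x with hg'
  have hDder : ∀ x, HasDerivAt D (p * Real.exp x) x := fun x => by
    exact ((Real.hasDerivAt_exp x).const_mul p).const_add (1 - p)
  have hgder : ∀ x, HasDerivAt g (g' x) x := by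
    intro x
    have h1 : HasDerivAt (fun x : ℝ => p * x + x ^ 2 / 8) (p + x / 4) x := by
      have := ((hasDerivAt_pow 2 x).div_const 8).const_add 0
      have h2 : HasDerivAt (fun x : ℝ => p * x) p x := by
        simpa using (hasDerivAt_id x).const_mul p
      have := h2.add ((hasDerivAt_pow 2 x).div_const 8)
      refine this.congr_deriv ?_
      ring
    have h3 : HasDerivAt (fun x => Real.log (D x)) (p * Real.exp x / D x) x :=
      (hDder x).log (hDpos x).ne'
    exact h1.sub h3
  have hg'der : ∀ x, HasDerivAt g'
      (1/4 - (p * Real.exp x * D x - p * Real.exp x * (p * Real.exp x)) / (D x) ^ 2) x := by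
    intro x
    have h1 : HasDerivAt (fun x : ℝ => p + x / 4) (1/4) x := by
      simpa using ((hasDerivAt_id x).div_const 4).const_add p
    have h2 : HasDerivAt (fun x => p * Real.exp x / D x)
        ((p * Real.exp x * D x - p * Real.exp x * (p * Real.exp x)) / (D x) ^ 2) x :=
      ((Real.hasDerivAt_exp x).const_mul p).div (hDder x) (hDpos x).ne'
    exact h1.sub h2
  have hg''nonneg : ∀ x, 0 ≤ 1/4 - (p * Real.exp x * D x - p * Real.exp x * (p * Real.exp x)) / (D x) ^ 2 := by
    intro x
    rw [sub_nonneg, div_le_iff₀ (pow_pos (hDpos x) 2)]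
    have hx : Real.exp x > 0 := Real.exp_pos x
    have hDx : D x = 1 - p + p * Real.exp x := rfl
    nlinarith [sq_nonneg ((1 - p) - p * Real.exp x)]
  have hg'mono : Monotone g' := by
    apply monotone_of_deriv_nonneg (fun x => (hg'der x).differentiableAt)
    intro x
    rw [(hg'der x).deriv]
    exact hg''nonneg x
  have hg'0 : g' 0 = 0 := by simp [hg', hD]
  have hgdiff : Differentiable ℝ g := fun x => (hgder x).differentiableAt
  have hg0 : g 0 = 0 := by simp [hg, hD]
  have hmain : ∀ x, 0 ≤ g x := by
    intro x
    rcases le_total 0 x with hx | hx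
    · have : MonotoneOn g (Set.Ici 0) := by
        apply monotoneOn_of_deriv_nonneg (convex_Ici 0) hgdiff.continuous.continuousOn
          (hgdiff.differentiableOn)
        intro y hy
        rw [(hgder y).deriv, ← hg'0]
        exact hg'mono (le_of_lt (by simpa [interior_Ici] using hy))
      have := this (Set.self_mem_Ici) (Set.mem_Ici.mpr hx) hx
      linarith [hg0 ▸ this]
    · have : AntitoneOn g (Set.Iic 0) := by
        apply antitoneOn_of_deriv_nonpos (convex_Iic 0) hgdiff.continuous.continuousOn
          (hgdiff.differentiableOn)
        intro y hy
        rw [(hgder y).deriv, ← hg'0]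
        exact hg'mono (le_of_lt (by simpa [interior_Iic] using hy))
      have := this (Set.mem_Iic.mpr hx) (Set.self_mem_Iic) hx
      linarith [hg0 ▸ this]
  have := hmain h
  have hlog : Real.log (D h) ≤ p * h + h ^ 2 / 8 := by
    simp only [hg] at this; linarith
  calc D h = Real.exp (Real.log (D h)) := (Real.exp_log (hDpos h)).symm
    _ ≤ Real.exp (p * h + h ^ 2 / 8) := Real.exp_le_exp.mpr hlog

/-- Pointwise convexity bound: for `x ∈ [0,n]`, `exp (t*x) ≤ (1 - x/n) + (x/n) * exp (t*n)`. -/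
private lemma mint_exp_convex {n t x : ℝ} (hn : 0 < n) (hx0 : 0 ≤ x) (hxn : x ≤ n) :
    Real.exp (t * x) ≤ (1 - x / n) + (x / n) * Real.exp (t * n) := by
  have h1 : (0:ℝ) ≤ 1 - x / n := by
    rw [sub_nonneg, div_le_one hn]; exact hxn
  have h2 : (0:ℝ) ≤ x / n := by positivity
  have h3 : (1 - x / n) + x / n = 1 := by ring
  have := convexOn_exp.2 (Set.mem_univ (0:ℝ)) (Set.mem_univ (t * n)) h1 h2 h3
  simp only [smul_eq_mul, mul_zero, zero_add, Real.exp_zero, mul_one] at this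
  have hxx : x / n * (t * n) = t * x := by field_simp
  rw [hxx] at this
  linarith

/-- MGF bound (Hoeffding's lemma) for a finite discrete distribution. -/
private lemma mint_mgf {ι : Type*} [DecidableEq ι] (Ω : Finset ι) (pr Y : ι → ℝ)
    (hpr : ∀ H ∈ Ω, 0 ≤ pr H) (hsum : ∑ H ∈ Ω, pr H = 1)
    {n : ℝ} (hn : 0 < n) (hY : ∀ H ∈ Ω, 0 ≤ Y H ∧ Y H ≤ n) (t : ℝ) :
    ∑ H ∈ Ω, pr H * Real.exp (t * (Y H - (∑ H ∈ Ω, pr H * Y H))) ≤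
      Real.exp (t ^ 2 * n ^ 2 / 8) := by
  set μ : ℝ := ∑ H ∈ Ω, pr H * Y H with hμ
  have hμ0 : 0 ≤ μ := Finset.sum_nonneg fun H hH => mul_nonneg (hpr H hH) (hY H hH).1
  have hμn : μ ≤ n := by
    calc μ ≤ ∑ H ∈ Ω, pr H * n :=
          Finset.sum_le_sum fun H hH => mul_le_mul_of_nonneg_left (hY H hH).2 (hpr H hH)
      _ = n := by rw [← Finset.sum_mul, hsum, one_mul]
  have hstep : ∑ H ∈ Ω, pr H * Real.exp (t * Y H) ≤ (1 - μ / n) + (μ / n) * Real.exp (t * n) := by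
    calc ∑ H ∈ Ω, pr H * Real.exp (t * Y H)
        ≤ ∑ H ∈ Ω, pr H * ((1 - Y H / n) + (Y H / n) * Real.exp (t * n)) :=
          Finset.sum_le_sum fun H hH => mul_le_mul_of_nonneg_left
            (mint_exp_convex hn (hY H hH).1 (hY H hH).2) (hpr H hH)
      _ = ∑ H ∈ Ω, (pr H - pr H * Y H / n + pr H * Y H * Real.exp (t * n) / n) := by
          apply Finset.sum_congr rfl; intro H _; field_simp
      _ = (1 - μ / n) + (μ / n) * Real.exp (t * n) := by
          rw [Finset.sum_add_distrib, Finset.sum_sub_distrib, hsum, ← Finset.sum_div,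
            ← Finset.sum_div, ← Finset.sum_mul, ← hμ]
          ring
  have hkey : (1 - μ / n) + (μ / n) * Real.exp (t * n) ≤ Real.exp ((μ / n) * (t * n) + (t * n) ^ 2 / 8) :=
    mint_key (μ / n) (by positivity) (by rw [div_le_one hn]; exact hμn) (t * n)
  have hμtn : (μ / n) * (t * n) = t * μ := by field_simp
  have heq : ∑ H ∈ Ω, pr H * Real.exp (t * (Y H - μ)) =
      Real.exp (-(t * μ)) * ∑ H ∈ Ω, pr H * Real.exp (t * Y H) := by
    rw [Finset.mul_sum]
    apply Finset.sum_congr rfl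
    intro H _
    rw [mul_sub, Real.exp_sub, Real.exp_neg]
    field_simp
  rw [heq]
  calc Real.exp (-(t * μ)) * ∑ H ∈ Ω, pr H * Real.exp (t * Y H)
      ≤ Real.exp (-(t * μ)) * Real.exp ((μ / n) * (t * n) + (t * n) ^ 2 / 8) := by
        apply mul_le_mul_of_nonneg_left (le_trans hstep hkey) (le_of_lt (Real.exp_pos _))
    _ = Real.exp (t ^ 2 * n ^ 2 / 8) := by
        rw [← Real.exp_add, hμtn]; ring_nf

/-- One-sided Chernoff bound for sums of i.i.d. bounded discrete variables. -/
private lemma mint_chernoff {ι : Type*} [DecidableEq ι] (Ω : Finset ι) (pr Y : ι → ℝ)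
    (hpr : ∀ H ∈ Ω, 0 ≤ pr H) (hsum : ∑ H ∈ Ω, pr H = 1)
    {n : ℝ} (hn : 0 < n) (hY : ∀ H ∈ Ω, 0 ≤ Y H ∧ Y H ≤ n)
    {ε : ℝ} (hε : 0 < ε) (m : ℕ) :
    ∑ Hs ∈ (Fintype.piFinset fun _ : Fin m => Ω).filter
        (fun Hs : Fin m → ι => (m : ℝ) * ε < ∑ i : Fin m, (Y (Hs i) - (∑ H ∈ Ω, pr H * Y H))),
      ∏ i : Fin m, pr (Hs i) ≤ Real.exp (-(2 * m * ε ^ 2 / n ^ 2)) := by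
  classical
  set μ : ℝ := ∑ H ∈ Ω, pr H * Y H with hμ
  set t : ℝ := 4 * ε / n ^ 2 with ht
  have htpos : 0 < t := by positivity
  have hterm : ∀ Hs ∈ Fintype.piFinset fun _ : Fin m => Ω, (0:ℝ) ≤ ∏ i : Fin m, pr (Hs i) := by
    intro Hs hHs
    exact Finset.prod_nonneg fun i _ => hpr _ (Fintype.mem_piFinset.mp hHs i)
  have step1 : ∑ Hs ∈ (Fintype.piFinset fun _ : Fin m => Ω).filter
        (fun Hs : Fin m → ι => (m : ℝ) * ε < ∑ i : Fin m, (Y (Hs i) - μ)),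
      ∏ i : Fin m, pr (Hs i) ≤
      ∑ Hs ∈ Fintype.piFinset fun _ : Fin m => Ω,
        (∏ i : Fin m, pr (Hs i)) * Real.exp (t * ((∑ i : Fin m, (Y (Hs i) - μ)) - m * ε)) := by
    refine le_trans (Finset.sum_le_sum ?_)
      (Finset.sum_le_sum_of_subset_of_nonneg (Finset.filter_subset _ _) ?_)
    · intro Hs hHs
      rw [Finset.mem_filter] at hHs
      apply le_mul_of_one_le_right (hterm Hs hHs.1)
      rw [← Real.exp_zero]
      apply Real.exp_le_exp.mpr
      have := hHs.2
      nlinarith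
    · intro Hs hHs _
      exact mul_nonneg (hterm Hs hHs) (le_of_lt (Real.exp_pos _))
  have step2 : ∀ Hs : Fin m → ι,
      (∏ i : Fin m, pr (Hs i)) * Real.exp (t * ((∑ i : Fin m, (Y (Hs i) - μ)) - m * ε)) =
      Real.exp (-(t * (m * ε))) * ∏ i : Fin m, (pr (Hs i) * Real.exp (t * (Y (Hs i) - μ))) := by
    intro Hs
    rw [Finset.prod_mul_distrib, mul_sub, Real.exp_sub, Real.exp_neg, Finset.mul_sum,
      Real.exp_sum]
    field_simp
  have step3 : ∑ Hs ∈ Fintype.piFinset fun _ : Fin m => Ω,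
      ∏ i : Fin m, (pr (Hs i) * Real.exp (t * (Y (Hs i) - μ))) =
      (∑ H ∈ Ω, pr H * Real.exp (t * (Y H - μ))) ^ m := by
    have h := Finset.prod_univ_sum (fun _ : Fin m => Ω)
      (fun _ H => pr H * Real.exp (t * (Y H - μ)))
    rw [← h, Finset.prod_const, Finset.card_univ, Fintype.card_fin]
  have S1nonneg : (0:ℝ) ≤ ∑ H ∈ Ω, pr H * Real.exp (t * (Y H - μ)) :=
    Finset.sum_nonneg fun H hH => mul_nonneg (hpr H hH) (le_of_lt (Real.exp_pos _))
  have S1le : ∑ H ∈ Ω, pr H * Real.exp (t * (Y H - μ)) ≤ Real.exp (t ^ 2 * n ^ 2 / 8) :=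
    mint_mgf Ω pr Y hpr hsum hn hY t
  calc ∑ Hs ∈ (Fintype.piFinset fun _ : Fin m => Ω).filter
        (fun Hs : Fin m → ι => (m : ℝ) * ε < ∑ i : Fin m, (Y (Hs i) - μ)),
      ∏ i : Fin m, pr (Hs i)
      ≤ ∑ Hs ∈ Fintype.piFinset fun _ : Fin m => Ω,
        (∏ i : Fin m, pr (Hs i)) * Real.exp (t * ((∑ i : Fin m, (Y (Hs i) - μ)) - m * ε)) := step1
    _ = Real.exp (-(t * (m * ε))) * (∑ H ∈ Ω, pr H * Real.exp (t * (Y H - μ))) ^ m := by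
        simp_rw [step2]
        rw [← Finset.mul_sum, step3]
    _ ≤ Real.exp (-(t * (m * ε))) * (Real.exp (t ^ 2 * n ^ 2 / 8)) ^ m :=
        mul_le_mul_of_nonneg_left (pow_le_pow_left₀ S1nonneg S1le m) (le_of_lt (Real.exp_pos _))
    _ = Real.exp (-(t * (m * ε)) + m * (t ^ 2 * n ^ 2 / 8)) := by
        rw [← Real.exp_nat_mul, ← Real.exp_add]
    _ = Real.exp (-(2 * m * ε ^ 2 / n ^ 2)) := by
        congr 1
        rw [ht]
        field_simp
        ring
private lemma mintf_le {α : Type*} [Fintype α] [DecidableEq α] (P : Finset α)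
    (H : Finset (α × α)) (S : Finset α) : mintf P H S ≤ Pᶜ.card := by
  have hsub : {u : α | u ∉ P ∧ ∃ v ∈ P \ S, MintReach H S v u} ⊆ ↑(Pᶜ) := by
    intro u hu
    simp only [Finset.coe_compl, Set.mem_compl_iff, Finset.mem_coe]
    exact hu.1
  calc mintf P H S ≤ (↑(Pᶜ) : Set α).ncard :=
        Set.ncard_le_ncard hsub (Pᶜ).finite_toSet
    _ = Pᶜ.card := Set.ncard_coe_finset _

private lemma mintPr_sum {α : Type*} [DecidableEq α] (E : Finset (α × α)) (w : α × α → ℝ) :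
    ∑ H ∈ E.powerset, mintPr E w H = 1 := by
  unfold mintPr
  rw [← Finset.prod_add]
  apply Finset.prod_eq_one
  intro e _
  ring

open Classical in
theorem stmt9 {α : Type*} [Fintype α] [DecidableEq α] (E : Finset (α × α))
    (w : α × α → ℝ) (hw : ∀ e ∈ E, 0 ≤ w e ∧ w e ≤ 1)
    (P : Finset α) (hinc : ∀ e ∈ E, e.2 ∉ P) (hN : (Pᶜ : Finset α).Nonempty)
    (ε δ : ℝ) (hε : 0 < ε) (hδ0 : 0 < δ) (hδ1 : δ < 1)
    (m : ℕ)
    (hm : m = ⌈((Pᶜ.card : ℝ) ^ 2 / (2 * ε ^ 2)) * Real.log ((2 : ℝ) ^ (P.card + 1) / δ)⌉₊)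
    (S : Finset α) (hS : S ⊆ P) :
    ∑ Hs ∈ (Fintype.piFinset fun _ : Fin m => E.powerset).filter
        (fun Hs : Fin m → Finset (α × α) =>
          ε < |mintF E w P S - (1 / (m : ℝ)) * ∑ i : Fin m, (mintf P (Hs i) S : ℝ)|),
      ∏ i : Fin m, mintPr E w (Hs i) ≤ δ := by
  set n : ℝ := (Pᶜ.card : ℝ) with hn'
  have hn : 0 < n := by
    have h : 0 < Pᶜ.card := Finset.card_pos.mpr hN
    rw [hn']
    exact_mod_cast h
  set Ω : Finset (Finset (α × α)) := E.powerset with hΩ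
  set pr : Finset (α × α) → ℝ := mintPr E w with hprdef
  set X : Finset (α × α) → ℝ := fun H => (mintf P H S : ℝ) with hXdef
  set Y : Finset (α × α) → ℝ := fun H => n - X H with hYdef
  have hpr : ∀ H ∈ Ω, 0 ≤ pr H := by
    intro H hH
    rw [Finset.mem_powerset] at hH
    apply mul_nonneg
    · exact Finset.prod_nonneg fun e he => (hw e (hH he)).1
    · exact Finset.prod_nonneg fun e he => by
        have := (hw e (Finset.mem_sdiff.mp he).1).2; linarith
  have hsum : ∑ H ∈ Ω, pr H = 1 := mintPr_sum E w
  have hX : ∀ H ∈ Ω, 0 ≤ X H ∧ X H ≤ n := by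
    intro H _
    constructor
    · positivity
    · simp only [hXdef, hn']
      exact_mod_cast mintf_le P H S
  have hY : ∀ H ∈ Ω, 0 ≤ Y H ∧ Y H ≤ n := by
    intro H hH
    have := hX H hH
    constructor <;> simp [hYdef] <;> linarith [this.1, this.2]
  set μ : ℝ := mintF E w P S with hμdef
  have hmuS : ∑ H ∈ Ω, pr H * X H = μ := rfl
  have hμ0 : 0 ≤ μ := by
    rw [← hmuS]; exact Finset.sum_nonneg fun H hH => mul_nonneg (hpr H hH) (hX H hH).1
  have hμn : μ ≤ n := by
    rw [← hmuS]
    calc ∑ H ∈ Ω, pr H * X H ≤ ∑ H ∈ Ω, pr H * n :=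
          Finset.sum_le_sum fun H hH => mul_le_mul_of_nonneg_left (hX H hH).2 (hpr H hH)
      _ = n := by rw [← Finset.sum_mul, hsum, one_mul]
  have hμY : ∑ H ∈ Ω, pr H * Y H = n - μ := by
    simp only [hYdef, mul_sub, Finset.sum_sub_distrib, ← Finset.sum_mul, hsum, one_mul, hmuS]
  -- numeric facts about m
  set R : ℝ := (2 : ℝ) ^ (P.card + 1) / δ with hRdef
  have h2R : (2:ℝ) ≤ (2:ℝ) ^ (P.card + 1) := by
    calc (2:ℝ) = 2 ^ 1 := (pow_one 2).symm
      _ ≤ 2 ^ (P.card + 1) := by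
        apply pow_le_pow_right₀ (by norm_num) (by omega)
  have hR1 : (1:ℝ) < R := by
    rw [hRdef, lt_div_iff₀ hδ0]
    linarith
  have hRpos : (0:ℝ) < R := by linarith
  have hlogpos : 0 < Real.log R := Real.log_pos hR1
  have hL : n ^ 2 / (2 * ε ^ 2) * Real.log R ≤ (m : ℝ) := by
    rw [hm]; exact Nat.le_ceil _
  have hm1 : 1 ≤ m := by
    rw [hm]
    have h : (0:ℝ) < n ^ 2 / (2 * ε ^ 2) * Real.log R := by positivity
    exact Nat.ceil_pos.mpr h
  have hmpos : (0:ℝ) < (m : ℝ) := by exact_mod_cast hm1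
  -- exponent bound
  have hexp : Real.exp (-(2 * m * ε ^ 2 / n ^ 2)) ≤ δ / 2 ^ (P.card + 1) := by
    have h1 : Real.log R ≤ 2 * m * ε ^ 2 / n ^ 2 := by
      have h2 := mul_le_mul_of_nonneg_right hL (show (0:ℝ) ≤ 2 * ε ^ 2 / n ^ 2 by positivity)
      have h3 : n ^ 2 / (2 * ε ^ 2) * Real.log R * (2 * ε ^ 2 / n ^ 2) = Real.log R := by
        field_simp
      have h4 : (m : ℝ) * (2 * ε ^ 2 / n ^ 2) = 2 * m * ε ^ 2 / n ^ 2 := by ring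
      rw [h3, h4] at h2
      exact h2
    calc Real.exp (-(2 * m * ε ^ 2 / n ^ 2)) ≤ Real.exp (-Real.log R) :=
          Real.exp_le_exp.mpr (by linarith)
      _ = 1 / R := by rw [Real.exp_neg, Real.exp_log hRpos, one_div]
      _ = δ / 2 ^ (P.card + 1) := by rw [hRdef, one_div_div]
  -- the two one-sided events
  have hc1 := mint_chernoff Ω pr Y hpr hsum hn hY hε m
  have hc2 := mint_chernoff Ω pr X hpr hsum hn hX hε m
  set T := Fintype.piFinset fun _ : Fin m => Ω with hT
  set f1 := T.filter
      (fun Hs : Fin m → Finset (α × α) => (m : ℝ) * ε < ∑ i : Fin m, (Y (Hs i) - (∑ H ∈ Ω, pr H * Y H)))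
    with hf1
  set f2 := T.filter
      (fun Hs : Fin m → Finset (α × α) => (m : ℝ) * ε < ∑ i : Fin m, (X (Hs i) - (∑ H ∈ Ω, pr H * X H)))
    with hf2
  have hnonneg : ∀ Hs ∈ T, (0:ℝ) ≤ ∏ i : Fin m, pr (Hs i) := by
    intro Hs hHs
    exact Finset.prod_nonneg fun i _ => hpr _ (Fintype.mem_piFinset.mp hHs i)
  have hsub : T.filter (fun Hs : Fin m → Finset (α × α) =>
      ε < |μ - (1 / (m : ℝ)) * ∑ i : Fin m, (mintf P (Hs i) S : ℝ)|) ⊆ f1 ∪ f2 := by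
    intro Hs hHs
    rw [Finset.mem_filter] at hHs
    obtain ⟨hT', habs⟩ := hHs
    have hXsum : ∀ (c : ℝ), ∑ i : Fin m, (X (Hs i) - c) = (∑ i : Fin m, X (Hs i)) - m * c := by
      intro c
      rw [Finset.sum_sub_distrib, Finset.sum_const, Finset.card_univ, Fintype.card_fin,
        nsmul_eq_mul]
    rw [Finset.mem_union, hf1, hf2, Finset.mem_filter, Finset.mem_filter]
    rcases lt_abs.mp habs with h | h
    · left
      refine ⟨hT', ?_⟩
      have hYsum : ∑ i : Fin m, (Y (Hs i) - (∑ H ∈ Ω, pr H * Y H)) =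
          m * μ - ∑ i : Fin m, X (Hs i) := by
        rw [hμY]
        have e1 : ∀ i : Fin m, Y (Hs i) - (n - μ) = μ - X (Hs i) := fun i => by
          simp only [hYdef]; ring
        rw [Finset.sum_congr rfl (fun i _ => e1 i), Finset.sum_sub_distrib, Finset.sum_const,
          Finset.card_univ, Fintype.card_fin, nsmul_eq_mul]
      rw [hYsum]
      have hmul := mul_lt_mul_of_pos_left h hmpos
      have heq : (m : ℝ) * (μ - (1 / (m : ℝ)) * ∑ i : Fin m, X (Hs i)) =
          m * μ - ∑ i : Fin m, X (Hs i) := by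
        field_simp
      rw [heq] at hmul
      exact hmul
    · right
      refine ⟨hT', ?_⟩
      rw [hmuS, hXsum]
      have h' : ε < (1 / (m : ℝ)) * (∑ i : Fin m, X (Hs i)) - μ := by
        simp only [hXdef]
        linarith
      have hmul := mul_lt_mul_of_pos_left h' hmpos
      have heq : (m : ℝ) * ((1 / (m : ℝ)) * (∑ i : Fin m, X (Hs i)) - μ) =
          (∑ i : Fin m, X (Hs i)) - m * μ := by
        field_simp
      rw [heq] at hmul
      exact hmul
  calc ∑ Hs ∈ T.filter (fun Hs : Fin m → Finset (α × α) =>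
          ε < |μ - (1 / (m : ℝ)) * ∑ i : Fin m, (mintf P (Hs i) S : ℝ)|),
        ∏ i : Fin m, pr (Hs i)
      ≤ ∑ Hs ∈ f1 ∪ f2, ∏ i : Fin m, pr (Hs i) := by
        apply Finset.sum_le_sum_of_subset_of_nonneg hsub
        intro Hs hHs _
        refine hnonneg Hs ?_
        rcases Finset.mem_union.mp hHs with h | h
        · exact (Finset.mem_filter.mp h).1
        · exact (Finset.mem_filter.mp h).1
    _ ≤ (∑ Hs ∈ f1, ∏ i : Fin m, pr (Hs i)) + ∑ Hs ∈ f2, ∏ i : Fin m, pr (Hs i) := by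
        have hui := Finset.sum_union_inter (s₁ := f1) (s₂ := f2)
          (f := fun Hs : Fin m → Finset (α × α) => ∏ i : Fin m, pr (Hs i))
        have hint : (0:ℝ) ≤ ∑ Hs ∈ f1 ∩ f2, ∏ i : Fin m, pr (Hs i) :=
          Finset.sum_nonneg fun Hs hHs => hnonneg Hs
            (Finset.mem_filter.mp (Finset.mem_inter.mp hHs).1).1
        linarith
    _ ≤ Real.exp (-(2 * m * ε ^ 2 / n ^ 2)) + Real.exp (-(2 * m * ε ^ 2 / n ^ 2)) :=
        add_le_add hc1 hc2
    _ ≤ δ / 2 ^ (P.card + 1) + δ / 2 ^ (P.card + 1) := add_le_add hexp hexp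
    _ ≤ δ := by
        rw [← add_div, div_le_iff₀ (by positivity : (0:ℝ) < 2 ^ (P.card + 1))]
        nlinarith
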